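/- Let 𝔫 be the 5-dimensional real Lie algebra l₅,₉ (case A) with orthonormal basis {E₁,…,E₅} and non-zero brackets [E₁,E₂] = m·E₃ + s·E₄ + u·E₅, [E₁,E₃] = v·E₄, [E₂,E₃] = w·E₅, where m > 0, w > v > 0 and s, u ≥ 0. Then there exist no c ∈ ℝ and no derivation D of 𝔫 with Ric = c·Id + D; i.e. 𝔫 is never an algebraic Ricci soliton. -/
import Mathlib


open scoped BigOperators

namespace Nilsoliton13

noncomputable section

abbrev V : Type := Fin 5 → ℝ

/-- The orthonormal basis vectors E₁,…,E₅ (indexed 0,…,4). -/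
def E (i : Fin 5) : V := Pi.single i 1

/-- The inner product making `E` an orthonormal basis. -/
def ip (x y : V) : ℝ := ∑ i, x i * y i

/-- `D` is a derivation of the bracket `br`. -/
def IsDerivation (br : V → V → V) (D : V →ₗ[ℝ] V) : Prop :=
  ∀ X Y : V, D (br X Y) = br (D X) Y + br X (D Y)

/-- `Ric` is the Ricci operator of the nilpotent Lie group with left-invariant
metric determined by the bracket `br` and the orthonormal basis `E`. -/
def IsRicci (br : V → V → V) (Ric : V →ₗ[ℝ] V) : Prop :=
  ∀ X Y : V, ip (Ric X) Y =
      -(1/2) * (∑ i : Fin 5, ip (br X (E i)) (br Y (E i)))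
      + (1/4) * (∑ i : Fin 5, ∑ j : Fin 5, ip (br (E i) (E j)) X * ip (br (E i) (E j)) Y)

/-- The bracket of l₅,₉ (case A): [E₁,E₂] = m·E₃ + s·E₄ + u·E₅,
[E₁,E₃] = v·E₄, [E₂,E₃] = w·E₅. -/
def br (m s u v w : ℝ) (X Y : V) : V :=
  (m * (X 0 * Y 1 - X 1 * Y 0)) • E 2 + (s * (X 0 * Y 1 - X 1 * Y 0) + v * (X 0 * Y 2 - X 2 * Y 0)) • E 3 + (u * (X 0 * Y 1 - X 1 * Y 0) + w * (X 1 * Y 2 - X 2 * Y 1)) • E 4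


lemma Eapp (i j : Fin 5) : E i j = if j = i then 1 else 0 := by
  simp [E, Pi.single_apply]

set_option maxHeartbeats 1000000 in
theorem stmt13 (m s u v w : ℝ) (hm : 0 < m) (hvw : w > v) (hv : 0 < v) (hs : 0 ≤ s) (hu : 0 ≤ u)
    (Ric : V →ₗ[ℝ] V) (hRic : IsRicci (br m s u v w) Ric) :
    ¬ ∃ (c : ℝ) (D : V →ₗ[ℝ] V), IsDerivation (br m s u v w) D ∧
        Ric = c • (LinearMap.id : V →ₗ[ℝ] V) + D := by
  rintro ⟨c, D, hD, hEq⟩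
  -- components of D in terms of Ric and c
  have hDc : ∀ (X : V) (j : Fin 5), D X j = Ric X j - c * X j := by
    intro X j
    have h2 : Ric X j = c * X j + D X j := by
      rw [hEq]; simp [LinearMap.add_apply, LinearMap.smul_apply]
    linarith
  -- Ricci entries
  have h00 : Ric (E 0) 0 = -(m^2 + s^2 + u^2 + v^2) / 2 := by
    have h := hRic (E 0) (E 0)
    simp [ip, br, Fin.sum_univ_five, Eapp] at h
    linarith
  have h11 : Ric (E 1) 1 = -(m^2 + s^2 + u^2 + w^2) / 2 := by
    have h := hRic (E 1) (E 1)
    simp [ip, br, Fin.sum_univ_five, Eapp] at h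
    linarith
  have h20 : Ric (E 2) 0 = u * w / 2 := by
    have h := hRic (E 2) (E 0)
    simp [ip, br, Fin.sum_univ_five, Eapp] at h
    linarith
  have h21 : Ric (E 2) 1 = -(s * v) / 2 := by
    have h := hRic (E 2) (E 1)
    simp [ip, br, Fin.sum_univ_five, Eapp] at h
    linarith
  have h32 : Ric (E 3) 2 = m * s / 2 := by
    have h := hRic (E 3) (E 2)
    simp [ip, br, Fin.sum_univ_five, Eapp] at h
    linarith
  have h42 : Ric (E 4) 2 = m * u / 2 := by
    have h := hRic (E 4) (E 2)
    simp [ip, br, Fin.sum_univ_five, Eapp] at h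
    linarith
  have h33 : Ric (E 3) 3 = (s^2 + v^2) / 2 := by
    have h := hRic (E 3) (E 3)
    simp [ip, br, Fin.sum_univ_five, Eapp] at h
    linarith
  have h44 : Ric (E 4) 4 = (u^2 + w^2) / 2 := by
    have h := hRic (E 4) (E 4)
    simp [ip, br, Fin.sum_univ_five, Eapp] at h
    linarith
  -- the bracket values on basis vectors
  have hb02 : br m s u v w (E 0) (E 2) = v • E 3 := by
    funext k; simp [br, Eapp]
  have hb12 : br m s u v w (E 1) (E 2) = w • E 4 := by
    funext k; simp [br, Eapp]
  -- derivation equation for [E 0, E 2]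
  have hd1 := hD (E 0) (E 2)
  rw [hb02, map_smul] at hd1
  have hd12 := congrFun hd1 (2 : Fin 5)
  have hd13 := congrFun hd1 (3 : Fin 5)
  simp only [Pi.add_apply, Pi.smul_apply, smul_eq_mul, br, Eapp] at hd12 hd13
  simp [hDc, Eapp] at hd12 hd13
  -- derivation equation for [E 1, E 2]
  have hd2 := hD (E 1) (E 2)
  rw [hb12, map_smul] at hd2
  have hd22 := congrFun hd2 (2 : Fin 5)
  have hd24 := congrFun hd2 (4 : Fin 5)
  simp only [Pi.add_apply, Pi.smul_apply, smul_eq_mul, br, Eapp] at hd22 hd24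
  simp [hDc, Eapp] at hd22 hd24
  rw [h32, h21] at hd12
  rw [h42, h20] at hd22
  -- s = 0 and u = 0
  have hmvs : (m * v) * s = 0 := by linear_combination hd12
  have hmwu : (m * w) * u = 0 := by linear_combination hd22
  have hs0 : s = 0 := by
    rcases mul_eq_zero.mp hmvs with h | h
    · exact absurd h (ne_of_gt (mul_pos hm hv))
    · exact h
  have hu0 : u = 0 := by
    rcases mul_eq_zero.mp hmwu with h | h
    · exact absurd h (ne_of_gt (mul_pos hm (lt_trans hv hvw)))
    · exact h
  subst hs0; subst hu0
  rw [h33, h00, h21] at hd13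
  rw [h44, h11, h20] at hd24
  have e1 : (0^2 + v^2)/2 - c = (-(m^2 + 0^2 + 0^2 + v^2)/2 - c) + (Ric (E 2) 2 - c) := by
    apply mul_left_cancel₀ (ne_of_gt hv)
    linear_combination hd13
  have e2 : (0^2 + w^2)/2 - c = (-(m^2 + 0^2 + 0^2 + w^2)/2 - c) + (Ric (E 2) 2 - c) := by
    apply mul_left_cancel₀ (ne_of_gt (lt_trans hv hvw))
    linear_combination hd24
  have hvw2 : v^2 < w^2 := by nlinarith
  linarith [e1, e2]

end

end Nilsoliton13
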